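/- For every natural number n and every x in a ℚ-algebra, T_n(x+1) = 1 + Σ_{k=1}^{n} (2^k · ∏_{i=0}^{k-1} (n^2 - i^2) / (2k)!) · x^k. -/

import Mathlib

open Polynomial Polynomial.Chebyshev

private def Pp (k : ℕ) (a : ℚ) : ℚ := ∏ i ∈ Finset.range k, (a ^ 2 - (i : ℚ) ^ 2)

private lemma Pp_succ (k : ℕ) (a : ℚ) : Pp (k + 1) a = Pp k a * (a ^ 2 - (k : ℚ) ^ 2) := by
  simp [Pp, Finset.prod_range_succ]

private lemma Pp_pair (k : ℕ) (a : ℚ) :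
    (Pp (k + 1) (a + 1) + Pp (k + 1) (a - 1)
      = 2 * Pp (k + 1) a + 2 * (k + 1) * (2 * k + 1) * Pp k a)
    ∧ (a * (Pp (k + 1) (a + 1) - Pp (k + 1) (a - 1))
      = 2 * (2 * (k + 1) * a ^ 2 + (k + 1) * k) * Pp k a) := by
  induction k with
  | zero =>
    constructor <;> simp [Pp] <;> ring
  | succ k ih =>
    obtain ⟨h1, h2⟩ := ih
    have eX := Pp_succ (k + 1) (a + 1)
    have eY := Pp_succ (k + 1) (a - 1)
    have eZ := Pp_succ (k + 1) a
    have eW := Pp_succ k a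
    push_cast at eX eY eZ eW ⊢
    constructor
    · linear_combination eX + eY - 2 * eZ + ((a ^ 2 - ((k : ℚ) + 1) ^ 2) + 1) * h1
        + 2 * h2 + (2 - 2 * ((k : ℚ) + 2) * (2 * (k : ℚ) + 3)) * eW
    · linear_combination a * eX - a * eY + ((a ^ 2 - ((k : ℚ) + 1) ^ 2) + 1) * h2
        + 2 * a ^ 2 * h1
        + (4 * a ^ 2 - 2 * (2 * ((k : ℚ) + 2) * a ^ 2 + ((k : ℚ) + 2) * ((k : ℚ) + 1))) * eW

private def cf (n k : ℕ) : ℚ :=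
  (2 ^ k * ∏ i ∈ Finset.range k, ((n : ℚ) ^ 2 - (i : ℚ) ^ 2)) / (Nat.factorial (2 * k) : ℚ)

private lemma cf_eq (n k : ℕ) : cf n k = 2 ^ k * Pp k (n : ℚ) / (Nat.factorial (2 * k) : ℚ) := rfl

private lemma cf_zero (n : ℕ) : cf n 0 = 1 := by simp [cf]

private lemma cf_vanish {n k : ℕ} (h : n < k) : cf n k = 0 := by
  rw [cf_eq, Pp, Finset.prod_eq_zero (Finset.mem_range.mpr h) (by ring)]
  simp

private lemma cf_rec (n k : ℕ) :
    cf (n + 2) (k + 1) = 2 * cf (n + 1) k + 2 * cf (n + 1) (k + 1) - cf n (k + 1) := by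
  have h1 := (Pp_pair k ((n : ℚ) + 1)).1
  rw [show ((n:ℚ) + 1 + 1) = ((n + 2 : ℕ) : ℚ) by push_cast; ring,
      show ((n:ℚ) + 1 - 1) = ((n : ℕ) : ℚ) by push_cast; ring,
      show ((n:ℚ) + 1) = ((n + 1 : ℕ) : ℚ) by push_cast; ring] at h1
  have hfac : ((Nat.factorial (2 * (k + 1))) : ℚ)
      = (2 * k + 2) * (2 * k + 1) * (Nat.factorial (2 * k)) := by
    have h : 2 * (k + 1) = (2 * k + 1) + 1 := by ring
    rw [h, Nat.factorial_succ, Nat.factorial_succ]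
    push_cast; ring
  have hf0 : ((Nat.factorial (2 * k)) : ℚ) ≠ 0 := by exact_mod_cast Nat.factorial_ne_zero _
  have hprod : ((2 * (k:ℚ) + 2) * (2 * (k:ℚ) + 1)) ≠ 0 := by positivity
  rw [cf_eq (n+2) (k+1), cf_eq (n+1) k, cf_eq (n+1) (k+1), cf_eq n (k+1), hfac,
    show (2:ℚ) * (2 ^ k * Pp k ((n + 1 : ℕ) : ℚ) / (Nat.factorial (2 * k) : ℚ))
      = ((2 * (k:ℚ) + 2) * (2 * (k:ℚ) + 1) * (2 ^ (k+1) * Pp k ((n + 1 : ℕ) : ℚ)))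
        / ((2 * (k:ℚ) + 2) * (2 * (k:ℚ) + 1) * (Nat.factorial (2 * k) : ℚ)) by
      rw [mul_div_mul_left _ _ hprod]; ring]
  rw [← mul_div_assoc, ← add_div, div_sub_div_same]
  congr 1
  linear_combination (2:ℚ) ^ (k + 1) * h1

private lemma aux (A : Type*) [CommRing A] [Algebra ℚ A] (x : A) (n : ℕ) :
    Polynomial.aeval (x + 1) (T ℚ n)
      = ∑ k ∈ Finset.range (n + 1), algebraMap ℚ A (cf n k) * x ^ k := by
  induction n using Nat.twoStepInduction with
  | zero =>
    simp [T_zero, cf_zero]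
  | one =>
    have h11 : cf 1 1 = 1 := by norm_num [cf, Finset.prod_range_one, Nat.factorial]
    simp [T_one, Finset.sum_range_succ, cf_zero, h11]
    ring
  | more n ih1 ih2 =>
    have hT : T ℚ ((n + 2 : ℕ) : ℤ) = 2 * X * T ℚ ((n + 1 : ℕ) : ℤ) - T ℚ (n : ℤ) := by
      push_cast
      exact T_add_two ℚ n
    rw [hT, map_sub, map_mul, map_mul, map_ofNat, aeval_X, ih1, ih2]
    have ext1 : ∑ k ∈ Finset.range (n + 2), algebraMap ℚ A (cf (n + 1) k) * x ^ k
        = ∑ k ∈ Finset.range (n + 2 + 1), algebraMap ℚ A (cf (n + 1) k) * x ^ k := by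
      rw [Finset.sum_range_succ (n := n + 2), cf_vanish (show n + 1 < n + 2 by omega)]
      simp
    have ext0 : ∑ k ∈ Finset.range (n + 1), algebraMap ℚ A (cf n k) * x ^ k
        = ∑ k ∈ Finset.range (n + 2 + 1), algebraMap ℚ A (cf n k) * x ^ k := by
      rw [Finset.sum_range_succ (n := n + 2), Finset.sum_range_succ (n := n + 1),
        cf_vanish (show n < n + 2 by omega), cf_vanish (show n < n + 1 by omega)]
      simp
    rw [ext1, ext0]
    have key : ∑ k ∈ Finset.range (n + 2 + 1), algebraMap ℚ A (cf (n + 2) k) * x ^ k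
        - 2 * ∑ k ∈ Finset.range (n + 2 + 1), algebraMap ℚ A (cf (n + 1) k) * x ^ k
        + ∑ k ∈ Finset.range (n + 2 + 1), algebraMap ℚ A (cf n k) * x ^ k
        = 2 * x * ∑ k ∈ Finset.range (n + 2 + 1), algebraMap ℚ A (cf (n + 1) k) * x ^ k := by
      rw [Finset.mul_sum, Finset.mul_sum, ← Finset.sum_sub_distrib, ← Finset.sum_add_distrib]
      have lhs_eq : ∀ k ∈ Finset.range (n + 2 + 1),
          algebraMap ℚ A (cf (n + 2) k) * x ^ k - 2 * (algebraMap ℚ A (cf (n + 1) k) * x ^ k)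
            + algebraMap ℚ A (cf n k) * x ^ k
          = algebraMap ℚ A (cf (n + 2) k - 2 * cf (n + 1) k + cf n k) * x ^ k := by
        intro k _
        simp only [map_sub, map_add, map_mul, map_ofNat]
        ring
      rw [Finset.sum_congr rfl lhs_eq]
      have rhs_eq : ∀ k ∈ Finset.range (n + 2 + 1),
          2 * x * (algebraMap ℚ A (cf (n + 1) k) * x ^ k)
            = algebraMap ℚ A (2 * cf (n + 1) k) * x ^ (k + 1) := by
        intro k _
        simp only [map_mul, map_ofNat]
        ring
      rw [Finset.sum_congr rfl rhs_eq]
      rw [Finset.sum_range_succ'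
        (fun k => algebraMap ℚ A (cf (n + 2) k - 2 * cf (n + 1) k + cf n k) * x ^ k) (n + 2)]
      rw [Finset.sum_range_succ
        (fun k => algebraMap ℚ A (2 * cf (n + 1) k) * x ^ (k + 1)) (n + 2)]
      rw [cf_vanish (show n + 1 < n + 2 by omega)]
      have c0 : cf (n + 2) 0 - 2 * cf (n + 1) 0 + cf n 0 = 0 := by
        rw [cf_zero, cf_zero, cf_zero]; ring
      rw [c0]
      simp only [map_zero, mul_zero, zero_mul, add_zero, pow_zero, mul_one]
      refine Finset.sum_congr rfl ?_
      intro k _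
      rw [cf_rec n k]
      ring_nf
    linear_combination -key

private lemma sum_shape (A : Type*) [CommRing A] [Algebra ℚ A] (x : A) (n : ℕ) :
    ∑ k ∈ Finset.range (n + 1), algebraMap ℚ A (cf n k) * x ^ k
      = 1 + ∑ k ∈ Finset.Icc 1 n, algebraMap ℚ A (cf n k) * x ^ k := by
  rw [Finset.sum_range_succ' (fun k => algebraMap ℚ A (cf n k) * x ^ k) n]
  rw [cf_zero]
  simp only [map_one, one_mul, pow_zero]
  rw [add_comm]
  congr 1
  rw [← Finset.Ico_add_one_right_eq_Icc, Finset.sum_Ico_eq_sum_range]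
  simp [add_comm 1]

theorem chebyshev_eval_add_one (n : ℕ) (A : Type*) [CommRing A] [Algebra ℚ A] (x : A) :
    Polynomial.aeval (x + 1) (T ℚ n)
      = 1 + ∑ k ∈ Finset.Icc 1 n,
          algebraMap ℚ A ((2 ^ k * ∏ i ∈ Finset.range k, ((n : ℚ) ^ 2 - (i : ℚ) ^ 2))
            / (Nat.factorial (2 * k) : ℚ)) * x ^ k := by
  rw [aux A x n, sum_shape A x n]
  rfl
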